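/- For ρ > 1 define K(ρ) := ∫₀¹ dt/√(t(1−t)(ρ−t)) and K'(ρ) := ∫₁^ρ dt/√(t(t−1)(ρ−t)), and set L(ρ) := π·K'(ρ)/K(ρ). Then L(ρ) = log ρ + O(1) as ρ → ∞: there exist constants C > 0 and ρ₀ > 1 such that |L(ρ) − log ρ| ≤ C for all ρ ≥ ρ₀. Equivalently, √ρ·K(ρ) → π and √ρ·K'(ρ) − log ρ remains bounded as ρ → ∞. -/

import Mathlib

open Set Filter MeasureTheory intervalIntegral

lemma one_div_sqrt_eq_rpow (x : ℝ) : 1 / Real.sqrt x = x ^ (-(1/2) : ℝ) := by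
  rcases lt_trichotomy x 0 with h | h | h
  · rw [Real.sqrt_eq_zero_of_nonpos h.le, Real.rpow_def_of_neg h]
    simp [mul_comm]
    rw [show Real.pi * 2⁻¹ = Real.pi / 2 by ring, Real.cos_pi_div_two]
  · simp [h, Real.zero_rpow (by norm_num : (-(1/2):ℝ) ≠ 0)]
  · rw [Real.rpow_neg h.le, ← Real.sqrt_eq_rpow, one_div]

lemma intInt_one_div_sqrt (a b : ℝ) :
    IntervalIntegrable (fun x => 1 / Real.sqrt x) volume a b := by
  simp_rw [one_div_sqrt_eq_rpow]
  exact intervalIntegral.intervalIntegrable_rpow' (by norm_num)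

lemma intInt_one_div_sqrt_sub (a b c : ℝ) :
    IntervalIntegrable (fun t => 1 / Real.sqrt (t - c)) volume a b := by
  simpa using (intInt_one_div_sqrt (a - c) (b - c)).comp_sub_right c

lemma intInt_one_div_sqrt_const_sub (a b c : ℝ) :
    IntervalIntegrable (fun t => 1 / Real.sqrt (c - t)) volume a b := by
  simpa using (intInt_one_div_sqrt (c - a) (c - b)).comp_sub_left c

lemma ae_ne (b : ℝ) : ∀ᵐ x : ℝ, x ≠ b := by
  have : (volume : Measure ℝ) {b} = 0 := measure_singleton b
  rw [ae_iff]; simpa [not_not] using this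

lemma ae_restrict_Ioc_of_Ioo {a b : ℝ} {P : ℝ → Prop} (h : ∀ x ∈ Ioo a b, P x) :
    ∀ᵐ x ∂(volume.restrict (Ioc a b)), P x := by
  filter_upwards [ae_restrict_mem measurableSet_Ioc,
    (ae_mono Measure.restrict_le_self) (ae_ne b)] with x hx hne
  exact h x ⟨hx.1, lt_of_le_of_ne hx.2 hne⟩

lemma ae_restrict_Icc_of_Ioo {a b : ℝ} {P : ℝ → Prop} (h : ∀ x ∈ Ioo a b, P x) :
    ∀ᵐ x ∂(volume.restrict (Icc a b)), P x := by
  filter_upwards [ae_restrict_mem measurableSet_Icc,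
    (ae_mono Measure.restrict_le_self) (ae_ne b),
    (ae_mono Measure.restrict_le_self) (ae_ne a)] with x hx hnb hna
  exact h x ⟨lt_of_le_of_ne hx.1 (Ne.symm hna), lt_of_le_of_ne hx.2 hnb⟩

lemma one_div_sqrt_le {a b : ℝ} (ha : 0 < a) (h : a ≤ b) :
    1 / Real.sqrt b ≤ 1 / Real.sqrt a :=
  one_div_le_one_div_of_le (Real.sqrt_pos.mpr ha) (Real.sqrt_le_sqrt h)

lemma one_div_sqrt_half (t : ℝ) (ht : 0 < t) :
    1 / Real.sqrt (t / 2) = Real.sqrt 2 * (1 / Real.sqrt t) := by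
  rw [Real.sqrt_div ht.le, one_div_div, div_eq_mul_one_div]

lemma betaInt : IntervalIntegrable (fun t : ℝ => 1 / Real.sqrt (t * (1 - t))) volume 0 1 := by
  apply IntervalIntegrable.mono_fun'
    (g := fun t => Real.sqrt 2 * (1 / Real.sqrt t) + Real.sqrt 2 * (1 / Real.sqrt (1 - t)))
  · exact ((intInt_one_div_sqrt 0 1).const_mul _).add
      ((intInt_one_div_sqrt_const_sub 0 1 1).const_mul _)
  · exact (by fun_prop : Measurable fun t : ℝ => 1 / Real.sqrt (t * (1 - t))).aestronglyMeasurable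
  · rw [uIoc_of_le (by norm_num : (0:ℝ) ≤ 1)]
    apply ae_restrict_Ioc_of_Ioo
    intro t ⟨h0, h1⟩
    simp only [Real.norm_eq_abs]
    rw [abs_of_nonneg (by positivity)]
    rcases le_or_gt t (1/2) with hc | hc
    · have key : 1 / Real.sqrt (t * (1 - t)) ≤ Real.sqrt 2 * (1 / Real.sqrt t) := by
        rw [← one_div_sqrt_half t h0]
        exact one_div_sqrt_le (by linarith) (by nlinarith)
      have : (0:ℝ) ≤ Real.sqrt 2 * (1 / Real.sqrt (1 - t)) := by positivity
      linarith
    · have key : 1 / Real.sqrt (t * (1 - t)) ≤ Real.sqrt 2 * (1 / Real.sqrt (1 - t)) := by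
        rw [← one_div_sqrt_half (1 - t) (by linarith)]
        exact one_div_sqrt_le (by linarith) (by nlinarith)
      have : (0:ℝ) ≤ Real.sqrt 2 * (1 / Real.sqrt t) := by positivity
      linarith

lemma beta_val : ∫ t in (0:ℝ)..1, 1 / Real.sqrt (t * (1 - t)) = Real.pi := by
  have h := intervalIntegral.integral_eq_sub_of_hasDeriv_right_of_le (a := 0) (b := 1)
    (f := fun t => Real.arcsin (2 * t - 1))
    (f' := fun t => 1 / Real.sqrt (t * (1 - t)))
    (by norm_num)
    (Real.continuous_arcsin.comp (by continuity) |>.continuousOn)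
    ?_ betaInt
  · rw [h]
    norm_num [Real.arcsin_one, Real.arcsin_neg_one]
  · intro x ⟨h0, h1⟩
    have hd : HasDerivAt (fun t : ℝ => Real.arcsin (2 * t - 1))
        (1 / Real.sqrt (1 - (2 * x - 1) ^ 2) * 2) x := by
      have := (Real.hasDerivAt_arcsin
          (by simp only [id]; intro hc; nlinarith : (2 * (id x) - 1) ≠ -1)
          (by simp only [id]; intro hc; nlinarith : (2 * (id x) - 1) ≠ 1)).comp x
        ((hasDerivAt_id x).const_mul 2 |>.sub_const 1)
      simpa [Function.comp_def] using this
    have heq : 1 / Real.sqrt (1 - (2 * x - 1) ^ 2) * 2 = 1 / Real.sqrt (x * (1 - x)) := by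
      have h4 : 1 - (2 * x - 1) ^ 2 = 4 * (x * (1 - x)) := by ring
      have hs4 : Real.sqrt 4 = 2 := by
        rw [show (4:ℝ) = 2^2 by norm_num, Real.sqrt_sq (by norm_num)]
      rw [h4, show (4:ℝ) * (x * (1-x)) = (x*(1-x)) * 4 by ring,
        Real.sqrt_mul (by nlinarith), hs4]
      have hpos : 0 < Real.sqrt (x * (1 - x)) := Real.sqrt_pos.mpr (by nlinarith)
      field_simp
    rw [heq] at hd
    exact hd.hasDerivWithinAt

/-- The elliptic integral `K(ρ) = ∫₀¹ dt/√(t(1−t)(ρ−t))`. -/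
noncomputable def ellipticK (ρ : ℝ) : ℝ :=
  ∫ t in (0:ℝ)..1, 1 / Real.sqrt (t * (1 - t) * (ρ - t))

/-- The elliptic integral `K'(ρ) = ∫₁^ρ dt/√(t(t−1)(ρ−t))`. -/
noncomputable def ellipticK' (ρ : ℝ) : ℝ :=
  ∫ t in (1:ℝ)..ρ, 1 / Real.sqrt (t * (t - 1) * (ρ - t))

lemma one_div_sqrt_mul (a b : ℝ) (ha : 0 ≤ a) :
    1 / Real.sqrt (a * b) = 1 / Real.sqrt a * (1 / Real.sqrt b) := by
  rw [Real.sqrt_mul ha, one_div, mul_inv, one_div, one_div]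

lemma K_int {ρ : ℝ} (hρ : 1 < ρ) :
    IntervalIntegrable (fun t => 1 / Real.sqrt (t * (1 - t) * (ρ - t))) volume 0 1 := by
  apply IntervalIntegrable.mono_fun'
    (g := fun t => 1 / Real.sqrt (ρ - 1) * (1 / Real.sqrt (t * (1 - t))))
  · exact betaInt.const_mul _
  · exact (by fun_prop :
      Measurable fun t : ℝ => 1 / Real.sqrt (t * (1 - t) * (ρ - t))).aestronglyMeasurable
  · rw [uIoc_of_le (by norm_num : (0:ℝ) ≤ 1)]
    apply ae_restrict_Ioc_of_Ioo
    intro t ⟨h0, h1⟩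
    have hr1 : (0:ℝ) < ρ - 1 := by linarith
    have hII : (0:ℝ) < 1 - t := by linarith
    simp only [Real.norm_eq_abs]
    rw [abs_of_nonneg (by positivity)]
    rw [show 1 / Real.sqrt (ρ - 1) * (1 / Real.sqrt (t * (1 - t)))
        = 1 / Real.sqrt (t * (1 - t)) * (1 / Real.sqrt (ρ - 1)) from mul_comm _ _,
      ← one_div_sqrt_mul _ _ (by positivity)]
    refine one_div_sqrt_le (mul_pos (mul_pos h0 hII) hr1) ?_
    exact mul_le_mul_of_nonneg_left (by linarith) (by positivity)

lemma K_lower {ρ : ℝ} (hρ : 1 < ρ) : Real.pi / Real.sqrt ρ ≤ ellipticK ρ := by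
  have h := intervalIntegral.integral_mono_ae_restrict (μ := volume) (a := 0) (b := 1)
    (f := fun t => 1 / Real.sqrt ρ * (1 / Real.sqrt (t * (1 - t))))
    (g := fun t => 1 / Real.sqrt (t * (1 - t) * (ρ - t)))
    (by norm_num) (betaInt.const_mul _) (K_int hρ) ?_
  · rw [intervalIntegral.integral_const_mul, beta_val] at h
    calc Real.pi / Real.sqrt ρ = 1 / Real.sqrt ρ * Real.pi := by ring
    _ ≤ _ := h
  · apply ae_restrict_Icc_of_Ioo
    intro t ⟨h0, h1⟩
    have hII : (0:ℝ) < 1 - t := by linarith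
    have hrt : (0:ℝ) < ρ - t := by linarith
    have hr1 : (0:ℝ) < ρ - 1 := by linarith
    dsimp only
    rw [show 1 / Real.sqrt ρ * (1 / Real.sqrt (t * (1 - t)))
        = 1 / Real.sqrt (t * (1 - t)) * (1 / Real.sqrt ρ) from mul_comm _ _,
      ← one_div_sqrt_mul _ _ (by positivity)]
    refine one_div_sqrt_le (mul_pos (mul_pos h0 hII) hrt) ?_
    exact mul_le_mul_of_nonneg_left (by linarith) (by positivity)

lemma K_upper {ρ : ℝ} (hρ : 1 < ρ) : ellipticK ρ ≤ Real.pi / Real.sqrt (ρ - 1) := by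
  have h := intervalIntegral.integral_mono_ae_restrict (μ := volume) (a := 0) (b := 1)
    (g := fun t => 1 / Real.sqrt (ρ - 1) * (1 / Real.sqrt (t * (1 - t))))
    (f := fun t => 1 / Real.sqrt (t * (1 - t) * (ρ - t)))
    (by norm_num) (K_int hρ) (betaInt.const_mul _) ?_
  · rw [intervalIntegral.integral_const_mul, beta_val] at h
    calc ellipticK ρ ≤ 1 / Real.sqrt (ρ - 1) * Real.pi := h
    _ = Real.pi / Real.sqrt (ρ - 1) := by ring
  · apply ae_restrict_Icc_of_Ioo
    intro t ⟨h0, h1⟩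
    have hII : (0:ℝ) < 1 - t := by linarith
    have hrt : (0:ℝ) < ρ - t := by linarith
    have hr1 : (0:ℝ) < ρ - 1 := by linarith
    dsimp only
    rw [show 1 / Real.sqrt (ρ - 1) * (1 / Real.sqrt (t * (1 - t)))
        = 1 / Real.sqrt (t * (1 - t)) * (1 / Real.sqrt (ρ - 1)) from mul_comm _ _,
      ← one_div_sqrt_mul _ _ (by positivity)]
    refine one_div_sqrt_le (mul_pos (mul_pos h0 hII) hr1) ?_
    exact mul_le_mul_of_nonneg_left (by linarith) (by positivity)
lemma K_tendsto : Tendsto (fun ρ => Real.sqrt ρ * ellipticK ρ) atTop (nhds Real.pi) := by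
  have h1 : Tendsto (fun ρ : ℝ => ρ / (ρ - 1)) atTop (nhds 1) := by
    have ha : Tendsto (fun ρ : ℝ => ρ - 1) atTop atTop :=
      tendsto_atTop_add_const_right atTop (-1) tendsto_id
    have hb : Tendsto (fun ρ : ℝ => (ρ - 1)⁻¹) atTop (nhds 0) :=
      tendsto_inv_atTop_zero.comp ha
    have h2 : Tendsto (fun ρ : ℝ => 1 + (ρ - 1)⁻¹) atTop (nhds 1) := by
      have := (tendsto_const_nhds (x := (1:ℝ)) (f := atTop)).add hb
      simpa using this
    apply h2.congr'
    filter_upwards [eventually_gt_atTop (1:ℝ)] with ρ hρ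
    have hne : ρ - 1 ≠ 0 := sub_ne_zero.mpr (by linarith)
    field_simp
    ring
  have hupper : Tendsto (fun ρ : ℝ => Real.pi * Real.sqrt (ρ / (ρ - 1))) atTop
      (nhds Real.pi) := by
    have := (Real.continuous_sqrt.tendsto 1).comp h1
    simpa using this.const_mul Real.pi
  apply tendsto_of_tendsto_of_tendsto_of_le_of_le' tendsto_const_nhds hupper
  · filter_upwards [eventually_gt_atTop (1:ℝ)] with ρ hρ
    have hK := K_lower hρ
    have hs : 0 < Real.sqrt ρ := Real.sqrt_pos.mpr (by linarith)
    calc Real.pi = Real.sqrt ρ * (Real.pi / Real.sqrt ρ) := by field_simp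
    _ ≤ Real.sqrt ρ * ellipticK ρ := mul_le_mul_of_nonneg_left hK hs.le
  · filter_upwards [eventually_gt_atTop (1:ℝ)] with ρ hρ
    have hK := K_upper hρ
    have hs : 0 < Real.sqrt ρ := Real.sqrt_pos.mpr (by linarith)
    calc Real.sqrt ρ * ellipticK ρ ≤ Real.sqrt ρ * (Real.pi / Real.sqrt (ρ-1)) :=
      mul_le_mul_of_nonneg_left hK hs.le
    _ = Real.pi * (Real.sqrt ρ / Real.sqrt (ρ-1)) := by ring
    _ = Real.pi * Real.sqrt (ρ/(ρ-1)) := by rw [Real.sqrt_div (by linarith : (0:ℝ) ≤ ρ)]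
lemma sqrt_int_eval : ∫ t in (1:ℝ)..2, 1 / Real.sqrt (t - 1) = 2 := by
  have h := intervalIntegral.integral_eq_sub_of_hasDeriv_right_of_le (a := 1) (b := 2)
    (f := fun t => 2 * Real.sqrt (t - 1)) (f' := fun t => 1 / Real.sqrt (t - 1))
    (by norm_num) (Continuous.continuousOn (by continuity)) ?_ (intInt_one_div_sqrt_sub 1 2 1)
  · rw [h]; norm_num
  · intro x ⟨hx1, hx2⟩
    have hpos : 0 < x - 1 := by linarith
    have hsp : 0 < Real.sqrt (x - 1) := Real.sqrt_pos.mpr hpos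
    have hd : HasDerivAt (fun t : ℝ => 2 * Real.sqrt (t - 1))
        (2 * (1 / (2 * Real.sqrt (x - 1)) * 1)) x :=
      ((Real.hasDerivAt_sqrt (ne_of_gt hpos)).comp x
        ((hasDerivAt_id x).sub_const 1)).const_mul 2
    have heq : 2 * (1 / (2 * Real.sqrt (x - 1)) * 1) = 1 / Real.sqrt (x - 1) := by
      field_simp
    rw [heq] at hd
    exact hd.hasDerivWithinAt
lemma g_int {ρ : ℝ} (hρ : 4 ≤ ρ) :
    IntervalIntegrable (fun t => 1 / ((t - 1) * Real.sqrt (ρ - t))) volume 2 ρ := by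
  apply IntervalIntegrable.mono_fun' (g := fun t => 1 / Real.sqrt (ρ - t))
  · exact intInt_one_div_sqrt_const_sub 2 ρ ρ
  · exact (by fun_prop :
      Measurable fun t : ℝ => 1 / ((t - 1) * Real.sqrt (ρ - t))).aestronglyMeasurable
  · rw [uIoc_of_le (by linarith : (2:ℝ) ≤ ρ)]
    apply ae_restrict_Ioc_of_Ioo
    intro t ⟨h2, hr⟩
    have h1 : (1:ℝ) ≤ t - 1 := by linarith
    have hs : 0 < Real.sqrt (ρ - t) := Real.sqrt_pos.mpr (by linarith)
    simp only [Real.norm_eq_abs]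
    rw [abs_of_nonneg (by positivity)]
    rw [div_le_div_iff₀ (by positivity) hs]
    nlinarith [hs.le]

lemma J_eval {ρ : ℝ} (hρ : 4 ≤ ρ) :
    ∫ t in (2:ℝ)..ρ, 1 / ((t - 1) * Real.sqrt (ρ - t))
      = 2 / Real.sqrt (ρ - 1) * Real.log (Real.sqrt (ρ - 1) + Real.sqrt (ρ - 2)) := by
  set c := Real.sqrt (ρ - 1) with hc
  have hc2 : c ^ 2 = ρ - 1 := Real.sq_sqrt (by linarith)
  have hcpos : 0 < c := Real.sqrt_pos.mpr (by linarith)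
  set s2 := Real.sqrt (ρ - 2) with hs2
  have hs22 : s2 ^ 2 = ρ - 2 := Real.sq_sqrt (by linarith)
  have hs2nn : 0 ≤ s2 := Real.sqrt_nonneg _
  have hcs : s2 < c := Real.sqrt_lt_sqrt (by linarith) (by linarith)
  have key : ∀ t ∈ Icc (2:ℝ) ρ, Real.sqrt (ρ - t) ≤ s2 := by
    intro t ⟨ht2, htr⟩
    exact Real.sqrt_le_sqrt (by linarith)
  have h := intervalIntegral.integral_eq_sub_of_hasDeriv_right_of_le (a := 2) (b := ρ)
    (f := fun t => 1 / c * (Real.log (c - Real.sqrt (ρ - t)) - Real.log (c + Real.sqrt (ρ - t))))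
    (f' := fun t => 1 / ((t - 1) * Real.sqrt (ρ - t)))
    (by linarith) ?_ ?_ (g_int hρ)
  · rw [h]
    have hprod : (c - s2) * (c + s2) = 1 := by nlinarith
    have hcs2pos : 0 < c + s2 := by linarith
    have hlog : Real.log (c - s2) = - Real.log (c + s2) := by
      have hlm := Real.log_mul (by nlinarith : c - s2 ≠ 0) (by nlinarith : c + s2 ≠ 0)
      rw [hprod, Real.log_one] at hlm
      linarith [hlm.symm]
    have hρρ : Real.sqrt (ρ - ρ) = 0 := by rw [sub_self, Real.sqrt_zero]
    simp only [hρρ, Real.sqrt_zero, sub_zero, add_zero, sub_self, mul_zero, zero_sub, ← hs2, hlog]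
    ring
  · -- continuity
    apply ContinuousOn.mul continuousOn_const
    apply ContinuousOn.sub
    · apply ContinuousOn.log
      · exact (continuous_const.sub ((continuous_const.sub continuous_id).sqrt)).continuousOn
      · intro t ht
        have := key t ht
        have : c - Real.sqrt (ρ - t) > 0 := by linarith
        linarith
    · apply ContinuousOn.log
      · exact (continuous_const.add ((continuous_const.sub continuous_id).sqrt)).continuousOn
      · intro t ht
        have h0 : 0 ≤ Real.sqrt (ρ - t) := Real.sqrt_nonneg _
        nlinarith
  · -- derivative
    intro x ⟨hx2, hxr⟩
    have hrx : 0 < ρ - x := by linarith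
    set k := Real.sqrt (ρ - x) with hk
    have hkpos : 0 < k := Real.sqrt_pos.mpr hrx
    have hk2 : k ^ 2 = ρ - x := Real.sq_sqrt hrx.le
    have hks : k ≤ s2 := Real.sqrt_le_sqrt (by linarith)
    have hck : 0 < c - k := by linarith
    have hckp : 0 < c + k := by linarith
    have hx1 : 0 < x - 1 := by linarith
    have hsd : HasDerivAt (fun t : ℝ => Real.sqrt (ρ - t)) (1 / (2 * k) * (0 - 1)) x :=
      (Real.hasDerivAt_sqrt (ne_of_gt hrx)).comp x
        ((hasDerivAt_const x ρ).sub (hasDerivAt_id x))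
    have hd1 : HasDerivAt (fun t : ℝ => Real.log (c - Real.sqrt (ρ - t)))
        ((0 - 1 / (2 * k) * (0 - 1)) / (c - k)) x :=
      ((hasDerivAt_const x c).sub hsd).log (ne_of_gt hck)
    have hd2 : HasDerivAt (fun t : ℝ => Real.log (c + Real.sqrt (ρ - t)))
        ((0 + 1 / (2 * k) * (0 - 1)) / (c + k)) x :=
      ((hasDerivAt_const x c).add hsd).log (ne_of_gt hckp)
    have hd : HasDerivAt (fun t : ℝ =>
        1 / c * (Real.log (c - Real.sqrt (ρ - t)) - Real.log (c + Real.sqrt (ρ - t))))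
        (1 / c * ((0 - 1 / (2 * k) * (0 - 1)) / (c - k) - (0 + 1 / (2 * k) * (0 - 1)) / (c + k)))
        x := (hd1.sub hd2).const_mul (1 / c)
    have hc0 : c ≠ 0 := ne_of_gt hcpos
    have hk0 : k ≠ 0 := ne_of_gt hkpos
    have hck0 : c - k ≠ 0 := ne_of_gt hck
    have hckp0 : c + k ≠ 0 := ne_of_gt hckp
    have heq : 1 / c * ((0 - 1 / (2 * k) * (0 - 1)) / (c - k)
        - (0 + 1 / (2 * k) * (0 - 1)) / (c + k)) = 1 / ((x - 1) * k) := by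
      have hprod : (c - k) * (c + k) = x - 1 := by nlinarith
      rw [show (x - 1) * k = ((c - k) * (c + k)) * k by rw [hprod]]
      field_simp
      ring
    rw [heq] at hd
    exact hd.hasDerivWithinAt
lemma K'_int {ρ : ℝ} (hρ : 1 < ρ) :
    IntervalIntegrable (fun t => 1 / Real.sqrt (t * (t - 1) * (ρ - t))) volume 1 ρ := by
  set m := (1 + ρ) / 2 with hm
  have hm1 : 1 < m := by rw [hm]; linarith
  have hmρ : m < ρ := by rw [hm]; linarith
  have part1 : IntervalIntegrable (fun t => 1 / Real.sqrt (t * (t - 1) * (ρ - t))) volume 1 m := by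
    apply IntervalIntegrable.mono_fun'
      (g := fun t => 1 / Real.sqrt (ρ - m) * (1 / Real.sqrt (t - 1)))
    · exact (intInt_one_div_sqrt_sub 1 m 1).const_mul _
    · exact (by fun_prop :
        Measurable fun t : ℝ => 1 / Real.sqrt (t * (t - 1) * (ρ - t))).aestronglyMeasurable
    · rw [uIoc_of_le hm1.le]
      apply ae_restrict_Ioc_of_Ioo
      intro t ⟨h1, h2⟩
      simp only [Real.norm_eq_abs]
      rw [abs_of_nonneg (by positivity)]
      rw [show 1 / Real.sqrt (ρ - m) * (1 / Real.sqrt (t - 1))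
          = 1 / Real.sqrt (t - 1) * (1 / Real.sqrt (ρ - m)) from mul_comm _ _,
        ← one_div_sqrt_mul _ _ (by linarith)]
      refine one_div_sqrt_le (mul_pos (by linarith) (by linarith)) ?_
      have e1 : (t-1)*(ρ-m) ≤ (t-1)*(ρ-t) := mul_le_mul_of_nonneg_left (by linarith) (by linarith)
      have e2 : (t-1)*(ρ-t) ≤ t*((t-1)*(ρ-t)) :=
        le_mul_of_one_le_left (mul_nonneg (by linarith) (by linarith)) h1.le
      exact le_trans (le_trans e1 e2) (le_of_eq (mul_assoc t _ _).symm)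
  have part2 : IntervalIntegrable (fun t => 1 / Real.sqrt (t * (t - 1) * (ρ - t))) volume m ρ := by
    apply IntervalIntegrable.mono_fun'
      (g := fun t => 1 / Real.sqrt (m - 1) * (1 / Real.sqrt (ρ - t)))
    · exact (intInt_one_div_sqrt_const_sub m ρ ρ).const_mul _
    · exact (by fun_prop :
        Measurable fun t : ℝ => 1 / Real.sqrt (t * (t - 1) * (ρ - t))).aestronglyMeasurable
    · rw [uIoc_of_le hmρ.le]
      apply ae_restrict_Ioc_of_Ioo
      intro t ⟨h1, h2⟩
      simp only [Real.norm_eq_abs]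
      rw [abs_of_nonneg (by positivity)]
      rw [show 1 / Real.sqrt (m - 1) * (1 / Real.sqrt (ρ - t))
          = 1 / Real.sqrt ((m - 1) * (ρ - t)) from (one_div_sqrt_mul _ _ (by linarith)).symm]
      refine one_div_sqrt_le (mul_pos (by linarith) (by linarith)) ?_
      have e1 : (m-1)*(ρ-t) ≤ (t-1)*(ρ-t) := mul_le_mul_of_nonneg_right (by linarith) (by linarith)
      have e2 : (t-1)*(ρ-t) ≤ t*((t-1)*(ρ-t)) :=
        le_mul_of_one_le_left (mul_nonneg (by linarith) (by linarith)) (by linarith)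
      exact le_trans (le_trans e1 e2) (le_of_eq (mul_assoc t _ _).symm)
  exact part1.trans part2

lemma sub_int {ρ : ℝ} (hρ : 1 < ρ) {a b : ℝ} (ha : 1 ≤ a) (hab : a ≤ b) (hb : b ≤ ρ) :
    IntervalIntegrable (fun t => 1 / Real.sqrt (t * (t - 1) * (ρ - t))) volume a b := by
  apply (K'_int hρ).mono_set'
  rw [uIoc_of_le hab, uIoc_of_le (by linarith)]
  exact Ioc_subset_Ioc ha hb

lemma K'_lower {ρ : ℝ} (hρ : 4 ≤ ρ) :
    Real.log ρ - 2 ≤ Real.sqrt ρ * ellipticK' ρ := by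
  have h1ρ : (1:ℝ) < ρ := by linarith
  set f : ℝ → ℝ := fun t => 1 / Real.sqrt (t * (t - 1) * (ρ - t)) with hf
  have hsplit1 : (∫ t in (1:ℝ)..2, f t) + (∫ t in (2:ℝ)..ρ, f t) = ∫ t in (1:ℝ)..ρ, f t :=
    intervalIntegral.integral_add_adjacent_intervals
      (sub_int h1ρ le_rfl (by norm_num) (by linarith))
      (sub_int h1ρ (by norm_num) (by linarith) le_rfl)
  have hsplit2 : (∫ t in (2:ℝ)..(ρ-1), f t) + (∫ t in (ρ-1)..ρ, f t) = ∫ t in (2:ℝ)..ρ, f t :=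
    intervalIntegral.integral_add_adjacent_intervals
      (sub_int h1ρ (by norm_num) (by linarith) (by linarith))
      (sub_int h1ρ (by linarith) (by linarith) le_rfl)
  have hnn1 : 0 ≤ ∫ t in (1:ℝ)..2, f t :=
    intervalIntegral.integral_nonneg (by norm_num) (fun u _ => by positivity)
  have hnn2 : 0 ≤ ∫ t in (ρ-1)..ρ, f t :=
    intervalIntegral.integral_nonneg (by linarith) (fun u _ => by positivity)
  have hmono : (∫ t in (2:ℝ)..(ρ-1), 1 / Real.sqrt ρ * (1 / t))
      ≤ ∫ t in (2:ℝ)..(ρ-1), f t := by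
    apply intervalIntegral.integral_mono_on (by linarith)
    · apply ContinuousOn.intervalIntegrable
      apply ContinuousOn.mul continuousOn_const
      apply ContinuousOn.div continuousOn_const continuousOn_id
      intro x hx
      rw [uIcc_of_le (by linarith : (2:ℝ) ≤ ρ - 1)] at hx
      intro h0; simp only [id] at h0; rw [h0] at hx; exact absurd hx.1 (by norm_num)
    · exact sub_int h1ρ (by norm_num) (by linarith) (by linarith)
    · intro t ⟨ht2, htr⟩
      have htpos : (0:ℝ) < t := by linarith
      rw [hf]
      rw [show 1 / Real.sqrt ρ * (1 / t) = 1 / (Real.sqrt ρ * t) by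
        rw [div_mul_div_comm, one_mul]]
      rw [show Real.sqrt ρ * t = Real.sqrt (ρ * t ^ 2) by
        rw [Real.sqrt_mul (by linarith : (0:ℝ) ≤ ρ), Real.sqrt_sq htpos.le]]
      refine one_div_sqrt_le (mul_pos (mul_pos htpos (by linarith)) (by linarith)) ?_
      calc t * (t - 1) * (ρ - t) ≤ t * t * (ρ - t) :=
            mul_le_mul_of_nonneg_right
              (mul_le_mul_of_nonneg_left (by linarith) htpos.le) (by linarith)
      _ ≤ t * t * ρ := mul_le_mul_of_nonneg_left (by linarith) (by positivity)
      _ = ρ * t ^ 2 := by ring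
  have h0mem : (0:ℝ) ∉ uIcc (2:ℝ) (ρ - 1) := by
    intro h; rw [uIcc_of_le (by linarith)] at h; exact absurd h.1 (by norm_num)
  have hval : (∫ t in (2:ℝ)..(ρ-1), 1 / Real.sqrt ρ * (1 / t))
      = 1 / Real.sqrt ρ * Real.log ((ρ-1)/2) := by
    rw [intervalIntegral.integral_const_mul]
    simp_rw [one_div]
    rw [integral_inv h0mem]
  have hKge : 1 / Real.sqrt ρ * Real.log ((ρ-1)/2) ≤ ellipticK' ρ := by
    have hK : ellipticK' ρ = ∫ t in (1:ℝ)..ρ, f t := rfl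
    rw [hK, ← hsplit1, ← hsplit2]
    rw [hval] at hmono
    linarith
  have hs : 0 < Real.sqrt ρ := Real.sqrt_pos.mpr (by linarith)
  have hmul : Real.log ((ρ-1)/2) ≤ Real.sqrt ρ * ellipticK' ρ := by
    calc Real.log ((ρ-1)/2) = Real.sqrt ρ * (1 / Real.sqrt ρ * Real.log ((ρ-1)/2)) := by
          field_simp
    _ ≤ Real.sqrt ρ * ellipticK' ρ := mul_le_mul_of_nonneg_left hKge hs.le
  have hlog1 : Real.log ((ρ-1)/2) = Real.log (ρ-1) - Real.log 2 :=
    Real.log_div (by linarith) (by norm_num)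
  have hlog2 : Real.log (ρ/2) ≤ Real.log (ρ-1) :=
    Real.log_le_log (by linarith) (by linarith)
  have hlog3 : Real.log (ρ/2) = Real.log ρ - Real.log 2 :=
    Real.log_div (by linarith) (by norm_num)
  have hlog4 : Real.log 2 ≤ 1 := by
    have := Real.log_le_sub_one_of_pos (by norm_num : (0:ℝ) < 2); linarith
  linarith


lemma K'_upper {ρ : ℝ} (hρ : 4 ≤ ρ) :
    Real.sqrt ρ * ellipticK' ρ ≤ Real.log ρ + 8 := by
  have h1ρ : (1:ℝ) < ρ := by linarith
  set f : ℝ → ℝ := fun t => 1 / Real.sqrt (t * (t - 1) * (ρ - t)) with hf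
  have hsplit1 : (∫ t in (1:ℝ)..2, f t) + (∫ t in (2:ℝ)..ρ, f t) = ∫ t in (1:ℝ)..ρ, f t :=
    intervalIntegral.integral_add_adjacent_intervals
      (sub_int h1ρ le_rfl (by norm_num) (by linarith))
      (sub_int h1ρ (by norm_num) (by linarith) le_rfl)
  have hs : 0 < Real.sqrt ρ := Real.sqrt_pos.mpr (by linarith)
  -- piece A
  have hA : (∫ t in (1:ℝ)..2, f t) ≤ (1 / Real.sqrt (ρ - 2)) * 2 := by
    have hmono := intervalIntegral.integral_mono_ae_restrict (μ := volume) (a := 1) (b := 2)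
      (f := f) (g := fun t => 1 / Real.sqrt (ρ - 2) * (1 / Real.sqrt (t - 1)))
      (by norm_num) (sub_int h1ρ le_rfl (by norm_num) (by linarith))
      ((intInt_one_div_sqrt_sub 1 2 1).const_mul _) ?_
    · rwa [intervalIntegral.integral_const_mul, sqrt_int_eval] at hmono
    · apply ae_restrict_Icc_of_Ioo
      intro t ⟨h1, h2⟩
      rw [hf]
      dsimp only
      rw [show 1 / Real.sqrt (ρ - 2) * (1 / Real.sqrt (t - 1))
          = 1 / Real.sqrt (t - 1) * (1 / Real.sqrt (ρ - 2)) from mul_comm _ _,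
        ← one_div_sqrt_mul _ _ (by linarith)]
      refine one_div_sqrt_le (mul_pos (by linarith) (by linarith)) ?_
      have e1 : (t-1)*(ρ-2) ≤ (t-1)*(ρ-t) := mul_le_mul_of_nonneg_left (by linarith) (by linarith)
      have e2 : (t-1)*(ρ-t) ≤ t*((t-1)*(ρ-t)) :=
        le_mul_of_one_le_left (mul_nonneg (by linarith) (by linarith)) h1.le
      exact le_trans (le_trans e1 e2) (le_of_eq (mul_assoc t _ _).symm)
  -- piece B
  have hB : (∫ t in (2:ℝ)..ρ, f t)
      ≤ 2 / Real.sqrt (ρ - 1) * Real.log (Real.sqrt (ρ - 1) + Real.sqrt (ρ - 2)) := by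
    have hmono := intervalIntegral.integral_mono_ae_restrict (μ := volume) (a := 2) (b := ρ)
      (f := f) (g := fun t => 1 / ((t - 1) * Real.sqrt (ρ - t)))
      (by linarith) (sub_int h1ρ (by norm_num) (by linarith) le_rfl) (g_int hρ) ?_
    · rwa [J_eval hρ] at hmono
    · apply ae_restrict_Icc_of_Ioo
      intro t ⟨h2, hr⟩
      rw [hf]
      dsimp only
      rw [show (t - 1) * Real.sqrt (ρ - t) = Real.sqrt ((t-1)^2 * (ρ - t)) by
        rw [Real.sqrt_mul (sq_nonneg _), Real.sqrt_sq (by linarith : (0:ℝ) ≤ t - 1)]]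
      refine one_div_sqrt_le (mul_pos (pow_pos (by linarith : (0:ℝ) < t - 1) 2) (by linarith)) ?_
      have e1 : (t-1)^2*(ρ-t) ≤ (t*(t-1))*(ρ-t) := by
        apply mul_le_mul_of_nonneg_right _ (by linarith)
        nlinarith
      calc (t-1)^2*(ρ-t) ≤ (t*(t-1))*(ρ-t) := e1
      _ = t*(t-1)*(ρ-t) := by ring
  -- assemble
  have hKval : ellipticK' ρ = (∫ t in (1:ℝ)..2, f t) + (∫ t in (2:ℝ)..ρ, f t) := by
    rw [hsplit1]; rfl
  have hc : (0:ℝ) < Real.sqrt (ρ - 1) := Real.sqrt_pos.mpr (by linarith)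
  have hs2nn : (0:ℝ) ≤ Real.sqrt (ρ - 2) := Real.sqrt_nonneg _
  -- bound √ρ * A-piece
  have hbndA : Real.sqrt ρ * ((1 / Real.sqrt (ρ - 2)) * 2) ≤ 3 := by
    have hr2 : (0:ℝ) < ρ - 2 := by linarith
    have hsr2 : 0 < Real.sqrt (ρ - 2) := Real.sqrt_pos.mpr hr2
    have e1 : Real.sqrt ρ * ((1 / Real.sqrt (ρ - 2)) * 2) = 2 * Real.sqrt (ρ / (ρ - 2)) := by
      rw [Real.sqrt_div (by linarith : (0:ℝ) ≤ ρ)]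
      field_simp
    rw [e1]
    have e2 : ρ / (ρ - 2) ≤ 2 := by
      rw [div_le_iff₀ hr2]; linarith
    have e3 : Real.sqrt (ρ / (ρ - 2)) ≤ Real.sqrt 2 := Real.sqrt_le_sqrt e2
    have e4 : Real.sqrt 2 ≤ 1.5 := by
      nlinarith [Real.sq_sqrt (show (0:ℝ) ≤ 2 by norm_num), Real.sqrt_nonneg 2]
    nlinarith
  -- bound √ρ * B-piece
  have hbndB : Real.sqrt ρ * (2 / Real.sqrt (ρ - 1)
      * Real.log (Real.sqrt (ρ - 1) + Real.sqrt (ρ - 2))) ≤ Real.log ρ + 5 := by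
    have hcs : Real.sqrt (ρ - 1) + Real.sqrt (ρ - 2) ≤ 2 * Real.sqrt ρ := by
      have := Real.sqrt_le_sqrt (by linarith : ρ - 1 ≤ ρ)
      have := Real.sqrt_le_sqrt (by linarith : ρ - 2 ≤ ρ)
      linarith
    have hone : (1:ℝ) ≤ Real.sqrt (ρ - 1) + Real.sqrt (ρ - 2) := by
      have hsq := Real.sq_sqrt (by linarith : (0:ℝ) ≤ ρ - 1)
      have hnn := Real.sqrt_nonneg (ρ - 1)
      have hnn2 := Real.sqrt_nonneg (ρ - 2)
      nlinarith
    have hlognn : 0 ≤ Real.log (Real.sqrt (ρ - 1) + Real.sqrt (ρ - 2)) :=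
      Real.log_nonneg hone
    have hlogle : Real.log (Real.sqrt (ρ - 1) + Real.sqrt (ρ - 2))
        ≤ Real.log 2 + Real.log ρ / 2 := by
      calc Real.log (Real.sqrt (ρ - 1) + Real.sqrt (ρ - 2)) ≤ Real.log (2 * Real.sqrt ρ) :=
        Real.log_le_log (by linarith) hcs
      _ = Real.log 2 + Real.log ρ / 2 := by
        rw [Real.log_mul (by norm_num) (ne_of_gt hs), Real.log_sqrt (by linarith)]
    -- √ρ/√(ρ-1) ≤ 1 + 2/ρ
    have hratio : Real.sqrt ρ / Real.sqrt (ρ - 1) ≤ 1 + 2 / ρ := by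
      rw [← Real.sqrt_div (by linarith : (0:ℝ) ≤ ρ)]
      have h1le : (1:ℝ) ≤ ρ / (ρ - 1) := by
        rw [le_div_iff₀ (by linarith)]; linarith
      have hself : Real.sqrt (ρ / (ρ - 1)) ≤ ρ / (ρ - 1) := by
        have hsq := Real.sq_sqrt (by positivity : (0:ℝ) ≤ ρ / (ρ - 1))
        have hnn := Real.sqrt_nonneg (ρ / (ρ - 1))
        nlinarith
      refine le_trans hself ?_
      rw [show (1:ℝ) + 2 / ρ = (ρ + 2) / ρ by field_simp,
        div_le_div_iff₀ (by linarith) (by linarith)]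
      nlinarith
    have hrw : Real.sqrt ρ * (2 / Real.sqrt (ρ - 1)
        * Real.log (Real.sqrt (ρ - 1) + Real.sqrt (ρ - 2)))
        = (Real.sqrt ρ / Real.sqrt (ρ - 1))
          * (2 * Real.log (Real.sqrt (ρ - 1) + Real.sqrt (ρ - 2))) := by ring
    rw [hrw]
    have hL : 2 * Real.log (Real.sqrt (ρ - 1) + Real.sqrt (ρ - 2))
        ≤ Real.log ρ + 2 * Real.log 2 := by linarith
    have hLnn : 0 ≤ 2 * Real.log (Real.sqrt (ρ - 1) + Real.sqrt (ρ - 2)) := by linarith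
    have hprod : (Real.sqrt ρ / Real.sqrt (ρ - 1))
          * (2 * Real.log (Real.sqrt (ρ - 1) + Real.sqrt (ρ - 2)))
        ≤ (1 + 2 / ρ) * (Real.log ρ + 2 * Real.log 2) :=
      mul_le_mul hratio hL hLnn (by positivity)
    have hlog2 : Real.log 2 ≤ 1 := by
      have := Real.log_le_sub_one_of_pos (by norm_num : (0:ℝ) < 2); linarith
    have hlogρ : Real.log ρ ≤ ρ - 1 := Real.log_le_sub_one_of_pos (by linarith)
    have hfinal : (1 + 2 / ρ) * (Real.log ρ + 2 * Real.log 2) ≤ Real.log ρ + 5 := by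
      have h2ρ : 2 / ρ ≤ 1 / 2 := by
        rw [div_le_div_iff₀ (by linarith) (by norm_num)]; linarith
      have hlognn2 : 0 ≤ Real.log ρ := Real.log_nonneg (by linarith)
      have e : (1 + 2 / ρ) * (Real.log ρ + 2 * Real.log 2)
          = Real.log ρ + 2 * Real.log 2 + (2 / ρ) * (Real.log ρ + 2 * Real.log 2) := by ring
      rw [e]
      have hq : (2 / ρ) * (Real.log ρ + 2 * Real.log 2) ≤ (2 / ρ) * (ρ + 1) := by
        apply mul_le_mul_of_nonneg_left (by linarith) (by positivity)
      have hq2 : (2 / ρ) * (ρ + 1) = 2 + 2 / ρ := by field_simp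
      have hq3 : 2 / ρ ≤ 1 := by rw [div_le_one (by linarith)]; linarith
      linarith
    linarith
  -- combine
  rw [hKval, mul_add]
  have t1 : Real.sqrt ρ * (∫ t in (1:ℝ)..2, f t) ≤ Real.sqrt ρ * ((1 / Real.sqrt (ρ - 2)) * 2) :=
    mul_le_mul_of_nonneg_left hA hs.le
  have t2 : Real.sqrt ρ * (∫ t in (2:ℝ)..ρ, f t) ≤ Real.sqrt ρ * (2 / Real.sqrt (ρ - 1)
      * Real.log (Real.sqrt (ρ - 1) + Real.sqrt (ρ - 2))) :=
    mul_le_mul_of_nonneg_left hB hs.le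
  linarith
lemma K'_nonneg {ρ : ℝ} (hρ : 1 ≤ ρ) : 0 ≤ ellipticK' ρ :=
  intervalIntegral.integral_nonneg hρ (fun u _ => by positivity)

lemma part1 {ρ : ℝ} (hρ : Real.exp 9 ≤ ρ) :
    |Real.pi * ellipticK' ρ / ellipticK ρ - Real.log ρ| ≤ 9 := by
  have hexp : (10:ℝ) ≤ Real.exp 9 := by
    have := Real.add_one_le_exp (9:ℝ); linarith
  have hρ10 : (10:ℝ) ≤ ρ := le_trans hexp hρ
  have hρ4 : (4:ℝ) ≤ ρ := by linarith
  have h1ρ : (1:ℝ) < ρ := by linarith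
  have hlog : (9:ℝ) ≤ Real.log ρ := (Real.le_log_iff_exp_le (by linarith)).mpr hρ
  have hlogρ : Real.log ρ ≤ ρ - 1 := Real.log_le_sub_one_of_pos (by linarith)
  have hs : 0 < Real.sqrt ρ := Real.sqrt_pos.mpr (by linarith)
  have hc : 0 < Real.sqrt (ρ - 1) := Real.sqrt_pos.mpr (by linarith)
  have hKpos : 0 < ellipticK ρ :=
    lt_of_lt_of_le (by positivity) (K_lower h1ρ)
  have hK'nn : 0 ≤ ellipticK' ρ := K'_nonneg h1ρ.le
  have hAl := K'_lower hρ4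
  have hAu := K'_upper hρ4
  -- upper bound
  have hup : Real.pi * ellipticK' ρ / ellipticK ρ ≤ Real.log ρ + 8 := by
    rw [div_le_iff₀ hKpos]
    have hAnn : 0 ≤ Real.sqrt ρ * ellipticK' ρ := by positivity
    calc Real.pi * ellipticK' ρ
        = (Real.sqrt ρ * ellipticK' ρ) * (Real.pi / Real.sqrt ρ) := by field_simp
    _ ≤ (Real.sqrt ρ * ellipticK' ρ) * ellipticK ρ :=
        mul_le_mul_of_nonneg_left (K_lower h1ρ) hAnn
    _ ≤ (Real.log ρ + 8) * ellipticK ρ :=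
        mul_le_mul_of_nonneg_right hAu hKpos.le
  -- lower bound
  have hratio : 1 - 1/ρ ≤ Real.sqrt (ρ - 1) / Real.sqrt ρ := by
    rw [← Real.sqrt_div (by linarith : (0:ℝ) ≤ ρ - 1)]
    have hx1 : (ρ - 1)/ρ ≤ 1 := by rw [div_le_one (by linarith)]; linarith
    have hsq := Real.sq_sqrt (by apply div_nonneg <;> linarith : (0:ℝ) ≤ (ρ - 1)/ρ)
    have hnn := Real.sqrt_nonneg ((ρ - 1)/ρ)
    have hx : 1 - 1/ρ = (ρ - 1)/ρ := by field_simp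
    rw [hx]
    nlinarith
  have hckey : Real.log ρ - 3 ≤ Real.sqrt (ρ - 1) * ellipticK' ρ := by
    have he : Real.sqrt (ρ - 1) * ellipticK' ρ
        = (Real.sqrt (ρ - 1) / Real.sqrt ρ) * (Real.sqrt ρ * ellipticK' ρ) := by
      field_simp
    rw [he]
    have hmm : (1 - 1/ρ) * (Real.log ρ - 2)
        ≤ (Real.sqrt (ρ - 1) / Real.sqrt ρ) * (Real.sqrt ρ * ellipticK' ρ) :=
      mul_le_mul hratio hAl (by linarith) (by positivity)
    have e : (1 - 1/ρ) * (Real.log ρ - 2)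
        = (Real.log ρ - 2) - (Real.log ρ - 2)/ρ := by ring
    have e2 : (Real.log ρ - 2)/ρ ≤ 1 := by
      rw [div_le_one (by linarith)]; linarith
    linarith [hmm, e ▸ hmm]
  have hlo : Real.log ρ - 9 ≤ Real.pi * ellipticK' ρ / ellipticK ρ := by
    rw [le_div_iff₀ hKpos]
    have h9nn : 0 ≤ Real.log ρ - 9 := by linarith
    calc (Real.log ρ - 9) * ellipticK ρ
        ≤ (Real.log ρ - 9) * (Real.pi / Real.sqrt (ρ - 1)) :=
          mul_le_mul_of_nonneg_left (K_upper h1ρ) h9nn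
    _ ≤ Real.pi * ellipticK' ρ := by
        rw [show (Real.log ρ - 9) * (Real.pi / Real.sqrt (ρ - 1))
            = Real.pi * ((Real.log ρ - 9) / Real.sqrt (ρ - 1)) by ring]
        apply mul_le_mul_of_nonneg_left _ Real.pi_nonneg
        rw [div_le_iff₀ hc]
        calc Real.log ρ - 9 ≤ Real.log ρ - 3 := by linarith
        _ ≤ Real.sqrt (ρ - 1) * ellipticK' ρ := hckey
        _ = ellipticK' ρ * Real.sqrt (ρ - 1) := mul_comm _ _
  rw [abs_le]
  constructor <;> linarith

/-- The length `L(ρ) = π·K'(ρ)/K(ρ)` of the conformal rectangle satisfies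
`L(ρ) = log ρ + O(1)` as `ρ → ∞`; equivalently `√ρ·K(ρ) → π` and
`√ρ·K'(ρ) − log ρ` stays bounded. -/
theorem rectangle_length_asymptotics :
    (∃ C > (0:ℝ), ∃ ρ₀ > (1:ℝ), ∀ ρ ≥ ρ₀,
      |Real.pi * ellipticK' ρ / ellipticK ρ - Real.log ρ| ≤ C) ∧
    Tendsto (fun ρ => Real.sqrt ρ * ellipticK ρ) atTop (nhds Real.pi) ∧
    (∃ C > (0:ℝ), ∃ ρ₀ > (1:ℝ), ∀ ρ ≥ ρ₀,
      |Real.sqrt ρ * ellipticK' ρ - Real.log ρ| ≤ C) := by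
  have hexp1 : (1:ℝ) < Real.exp 9 := by
    have := Real.add_one_le_exp (9:ℝ); linarith
  refine ⟨⟨9, by norm_num, Real.exp 9, hexp1, fun ρ hρ => part1 hρ⟩, K_tendsto,
    ⟨8, by norm_num, 4, by norm_num, fun ρ hρ => ?_⟩⟩
  rw [abs_le]
  exact ⟨by linarith [K'_lower hρ], by linarith [K'_upper hρ]⟩
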